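/- Let A be a unital C*-algebra and π : A → B(H) a bounded, unital, injective algebra homomorphism whose range π(A) is norm-closed in B(H). Then for every n ≥ 1 and every self-adjoint D ∈ M_n(A), the element ‖π⁽ⁿ⁾(D)‖·1 + D is positive in the C*-algebra M_n(A), where π⁽ⁿ⁾((x_ij)) = (π(x_ij)) and the norm is that of B(Hⁿ). -/

import Mathlib

open scoped ComplexOrder
open Matrix

noncomputable section

instance PiLp.instCompleteSpace' {p : ENNReal} {ι : Type*} {β : ι → Type*}
    [∀ i, UniformSpace (β i)] [∀ i, CompleteSpace (β i)] : CompleteSpace (PiLp p β) :=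
  inferInstance

/-- The bounded operator on the Hilbert space `Hⁿ` (modeled as `PiLp 2`) associated with an
`n × n` matrix of bounded operators on `H`, via `(T v) i = ∑ j, T i j (v j)`. -/
def matCLM {H : Type*} [NormedAddCommGroup H] [InnerProductSpace ℂ H] {n : ℕ}
    (T : Matrix (Fin n) (Fin n) (H →L[ℂ] H)) :
    (PiLp 2 fun _ : Fin n => H) →L[ℂ] PiLp 2 fun _ : Fin n => H :=
  ((PiLp.continuousLinearEquiv 2 ℂ fun _ : Fin n => H).symm.toContinuousLinearMap.comp
    (ContinuousLinearMap.pi fun i : Fin n =>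
      ∑ j : Fin n, (T i j).comp (ContinuousLinearMap.proj j))).comp
    (PiLp.continuousLinearEquiv 2 ℂ fun _ : Fin n => H).toContinuousLinearMap

/-- The norm `‖·‖ₙ` on `Mₙ(B(H))`, i.e. the operator norm of the associated operator
on `B(Hⁿ)`. -/
def matNorm {H : Type*} [NormedAddCommGroup H] [InnerProductSpace ℂ H] {n : ℕ}
    (T : Matrix (Fin n) (Fin n) (H →L[ℂ] H)) : ℝ := ‖matCLM T‖

/-- Positivity of a matrix of operators, i.e. positivity of the associated operator on `Hⁿ`. -/
def matPos {H : Type*} [NormedAddCommGroup H] [InnerProductSpace ℂ H] [CompleteSpace H] {n : ℕ}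
    (T : Matrix (Fin n) (Fin n) (H →L[ℂ] H)) : Prop := (matCLM T).IsPositive

/-! ### Auxiliary material -/

section matCLMfacts

variable {H : Type*} [NormedAddCommGroup H] [InnerProductSpace ℂ H] {n : ℕ}

lemma matCLM_apply (T : Matrix (Fin n) (Fin n) (H →L[ℂ] H))
    (v : PiLp 2 fun _ : Fin n => H) (i : Fin n) :
    matCLM T v i = ∑ j, T i j (v j) := by
  simp [matCLM, ContinuousLinearMap.sum_apply]

lemma matCLM_ext {S T : (PiLp 2 fun _ : Fin n => H) →L[ℂ] PiLp 2 fun _ : Fin n => H}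
    (h : ∀ v i, S v i = T v i) : S = T :=
  ContinuousLinearMap.ext fun v => (WithLp.ext_iff 2).mpr (funext fun i => h v i)

/-- `matCLM` as an algebra homomorphism. -/
def matAlgHom (H : Type*) [NormedAddCommGroup H] [InnerProductSpace ℂ H] (n : ℕ) :
    Matrix (Fin n) (Fin n) (H →L[ℂ] H) →ₐ[ℂ]
      ((PiLp 2 fun _ : Fin n => H) →L[ℂ] PiLp 2 fun _ : Fin n => H) where
  toFun := matCLM
  map_one' := matCLM_ext fun v i => by
    rw [matCLM_apply]
    rw [Finset.sum_eq_single i]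
    · simp
    · intro j _ hj
      simp [Matrix.one_apply, hj.symm]
    · simp
  map_mul' M N := matCLM_ext fun v i => by
    rw [matCLM_apply]
    show _ = matCLM M (matCLM N v) i
    rw [matCLM_apply]
    simp only [Matrix.mul_apply, ContinuousLinearMap.sum_apply, ContinuousLinearMap.mul_apply]
    rw [Finset.sum_comm]
    refine Finset.sum_congr rfl fun k _ => ?_
    rw [← map_sum (M i k)]
    congr 1
    exact (matCLM_apply N v k).symm
  map_zero' := matCLM_ext fun v i => by simp [matCLM_apply]
  map_add' M N := matCLM_ext fun v i => by
    show _ = matCLM M v i + matCLM N v i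
    simp [matCLM_apply, Finset.sum_add_distrib]
  commutes' c := matCLM_ext fun v i => by
    rw [matCLM_apply]
    show _ = (c • (ContinuousLinearMap.id ℂ _)) v i
    rw [Finset.sum_eq_single i]
    · simp [Matrix.algebraMap_matrix_apply, Algebra.algebraMap_eq_smul_one]
    · intro j _ hj
      simp [Matrix.algebraMap_matrix_apply, hj.symm]
    · simp

lemma matAlgHom_apply (T : Matrix (Fin n) (Fin n) (H →L[ℂ] H)) :
    matAlgHom H n T = matCLM T := rfl

/-- Extraction of the `(i,j)` entry of an operator on `Hⁿ`. -/
def matE (i j : Fin n) (T : (PiLp 2 fun _ : Fin n => H) →L[ℂ] PiLp 2 fun _ : Fin n => H) :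
    H →L[ℂ] H :=
  ((ContinuousLinearMap.proj i).comp
      ((PiLp.continuousLinearEquiv 2 ℂ fun _ : Fin n => H).toContinuousLinearMap.comp T)).comp
    ((PiLp.continuousLinearEquiv 2 ℂ fun _ : Fin n => H).symm.toContinuousLinearMap.comp
      (ContinuousLinearMap.pi fun k : Fin n =>
        if k = j then ContinuousLinearMap.id ℂ H else 0))

lemma matE_matCLM (M : Matrix (Fin n) (Fin n) (H →L[ℂ] H)) (i j : Fin n) :
    matE i j (matCLM M) = M i j := by
  ext x
  show matCLM M _ i = M i j x
  rw [matCLM_apply]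
  rw [Finset.sum_eq_single j]
  · simp
  · intro k _ hk
    have : (if k = j then ContinuousLinearMap.id ℂ H else 0) x = (0 : H) := by simp [hk]
    show M i k ((if k = j then ContinuousLinearMap.id ℂ H else 0) x) = 0
    rw [this, map_zero]
  · simp

lemma matE_continuous (i j : Fin n) : Continuous (matE (H := H) i j) := by
  unfold matE
  fun_prop

end matCLMfacts

section CStarFacts

open NormedSpace

variable {A : Type*} [NormedRing A] [StarRing A] [CStarRing A] [CompleteSpace A]
    [NormedAlgebra ℂ A] [StarModule ℂ A]

/-- Entries of a matrix `W` over a unital C⋆-algebra with `Wᴴ * W = 1` have norm at most 1. -/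
lemma entry_norm_le_one [Nontrivial A] {n : ℕ} {W : Matrix (Fin n) (Fin n) A}
    (hW : Wᴴ * W = 1) (i j : Fin n) : ‖W i j‖ ≤ 1 := by
  letI : CStarAlgebra A := { ‹NormedRing A›, ‹StarRing A›, ‹CStarRing A›, ‹CompleteSpace A›,
    ‹NormedAlgebra ℂ A›, ‹StarModule ℂ A› with }
  letI : PartialOrder A := CStarAlgebra.spectralOrder A
  letI : StarOrderedRing A := CStarAlgebra.spectralOrderedRing A
  have h1 : ∑ k, star (W k j) * W k j = 1 := by
    have := congrFun (congrFun hW j) j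
    simpa [Matrix.mul_apply, Matrix.one_apply, Matrix.conjTranspose_apply] using this
  have h2 : star (W i j) * W i j ≤ 1 := by
    rw [← h1]
    exact Finset.single_le_sum (f := fun k => star (W k j) * W k j)
      (fun k _ => star_mul_self_nonneg _) (Finset.mem_univ i)
  have h3 : ‖star (W i j) * W i j‖ ≤ ‖(1 : A)‖ :=
    CStarAlgebra.norm_le_norm_of_nonneg_of_le (star_mul_self_nonneg _) h2
  rw [CStarRing.norm_star_mul_self, norm_one] at h3
  nlinarith [norm_nonneg (W i j)]

/-- Bound on the modulus of exponentials of spectral values of a skew-adjoint matrix over a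
unital C⋆-algebra. -/
lemma abs_exp_le_of_skewAdjoint [Nontrivial A] {n : ℕ} (hn : 0 < n)
    {a : Matrix (Fin n) (Fin n) A} (ha : aᴴ = -a) {w : ℂ} (hw : w ∈ spectrum ℂ a) :
    ‖Complex.exp w‖ ≤ n := by
  haveI : Nonempty (Fin n) := ⟨⟨0, hn⟩⟩
  letI : NormedAlgebra ℚ A := NormedAlgebra.restrictScalars ℚ ℂ A
  letI : SeminormedRing (Matrix (Fin n) (Fin n) A) := Matrix.linftyOpSemiNormedRing
  letI : NormedRing (Matrix (Fin n) (Fin n) A) := Matrix.linftyOpNormedRing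
  letI : NormedAlgebra ℂ (Matrix (Fin n) (Fin n) A) := Matrix.linftyOpNormedAlgebra
  haveI : @CompleteSpace (Matrix (Fin n) (Fin n) A) PseudoMetricSpace.toUniformSpace := by
    set_option synthInstance.maxHeartbeats 1000000 in
    exact inferInstanceAs (CompleteSpace (Fin n → Fin n → A))
  set u : Matrix (Fin n) (Fin n) A := exp a with hu
  have h2 : exp (-a) * exp a = 1 := by
    have h3 := Matrix.exp_add_of_commute (-a) a (Commute.refl a).neg_left
    rw [neg_add_cancel, exp_zero] at h3
    exact h3.symm
  have hUnit : uᴴ * u = 1 := by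
    have h1 : exp (-a) = uᴴ := by rw [← ha]; exact Matrix.exp_conjTranspose a
    rw [← h1]
    exact h2
  have hnorm : ‖u‖ ≤ (n : ℝ) := by
    rw [Matrix.linfty_opNorm_def]
    have : (Finset.univ.sup fun i => ∑ j, ‖u i j‖₊) ≤ (n : NNReal) := by
      refine Finset.sup_le fun i _ => ?_
      calc ∑ j, ‖u i j‖₊ ≤ ∑ _j : Fin n, 1 := Finset.sum_le_sum fun j _ => ?_
        _ = (n : NNReal) := by simp
      · exact_mod_cast entry_norm_le_one hUnit i j
    exact_mod_cast this
  have hmem : exp w ∈ spectrum ℂ u := spectrum.exp_mem_exp a hw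
  have hle : ‖exp w‖ ≤ ‖u‖ := spectrum.norm_le_norm_of_mem hmem
  rw [← Complex.exp_eq_exp_ℂ] at hle
  calc ‖Complex.exp w‖ = ‖Complex.exp w‖ := rfl
    _ ≤ ‖u‖ := hle
    _ ≤ n := hnorm

/-- The spectrum (in `Mₙ(A)`) of a self-adjoint matrix over a unital C⋆-algebra is real. -/
lemma matrix_selfAdjoint_spectrum_real [Nontrivial A] {n : ℕ} (hn : 0 < n)
    {D : Matrix (Fin n) (Fin n) A} (hD : Dᴴ = D) {z : ℂ} (hz : z ∈ spectrum ℂ D) :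
    z.im = 0 := by
  have key : ∀ t : ℝ, t ≠ 0 → Real.exp (-(t * z.im)) ≤ n := by
    intro t ht
    have htC : (Complex.I * t) ≠ 0 := by
      simp [Complex.ext_iff, Complex.I_re, Complex.I_im, ht]
    set r : ℂˣ := Units.mk0 (Complex.I * t) htC with hr
    have ha : ((Complex.I * (t : ℂ)) • D)ᴴ = -((Complex.I * (t : ℂ)) • D) := by
      rw [Matrix.conjTranspose_smul, hD]
      rw [← neg_smul]
      congr 1
      simp [Complex.ext_iff]
    have hw : (Complex.I * t) * z ∈ spectrum ℂ ((Complex.I * (t : ℂ)) • D) := by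
      have := (spectrum.smul_mem_smul_iff (a := D) (s := z) (r := r)).mpr hz
      simpa [hr, Units.smul_def, smul_eq_mul] using this
    have := abs_exp_le_of_skewAdjoint hn ha hw
    calc Real.exp (-(t * z.im)) = ‖Complex.exp (Complex.I * t * z)‖ := by
          rw [Complex.norm_exp]
          congr 1
          simp [Complex.mul_re, Complex.mul_im]
      _ ≤ n := this
  by_contra hzim
  have hpos : (0:ℝ) < n + 1 := by positivity
  have hlog : Real.log (n + 1) ≠ 0 := by
    have h1 : (1:ℝ) < n + 1 := by
      have : (1:ℝ) ≤ n := by exact_mod_cast hn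
      linarith
    have := Real.log_pos h1
    linarith
  have ht : (-(Real.log (n+1)) / z.im) ≠ 0 := by
    apply div_ne_zero _ hzim
    simpa using hlog
  have := key _ ht
  rw [show -((-(Real.log (n+1)) / z.im) * z.im) = Real.log (n+1) by field_simp] at this
  rw [Real.exp_log hpos] at this
  linarith

end CStarFacts

section SpectralInclusion

open Filter

variable {A : Type*} [NormedRing A] [StarRing A] [CStarRing A] [CompleteSpace A]
    [NormedAlgebra ℂ A] [StarModule ℂ A]
    {H : Type*} [NormedAddCommGroup H] [InnerProductSpace ℂ H] [CompleteSpace H]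

set_option maxHeartbeats 4000000 in
/-- If all of `spectrum ℂ D` is real, then it is contained in the spectrum of the associated
operator `matCLM (D.map π)` on `Hⁿ`. -/
lemma spectrum_subset_op (π : A →ₐ[ℂ] (H →L[ℂ] H))
    (hbdd : ∃ M₀ : ℝ, ∀ a : A, ‖π a‖ ≤ M₀ * ‖a‖)
    (hinj : Function.Injective ⇑π)
    (hclosed : IsClosed (Set.range ⇑π))
    {n : ℕ} {D : Matrix (Fin n) (Fin n) A}
    (hreal : ∀ w ∈ spectrum ℂ D, w.im = 0)
    {z : ℂ} (hz : z ∈ spectrum ℂ D) :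
    z ∈ spectrum ℂ (matCLM (D.map ⇑π)) := by
  by_contra hcon
  rw [spectrum.notMem_iff] at hcon
  -- the algebra hom Φ
  set Φ : Matrix (Fin n) (Fin n) A →ₐ[ℂ]
      ((PiLp 2 fun _ : Fin n => H) →L[ℂ] PiLp 2 fun _ : Fin n => H) :=
    (matAlgHom H n).comp (AlgHom.mapMatrix π) with hΦ
  have hΦD : ∀ M : Matrix (Fin n) (Fin n) A, Φ M = matCLM (M.map ⇑π) := fun M => by
    rw [hΦ]; simp [AlgHom.mapMatrix_apply, matAlgHom_apply]
  -- the sequence of resolvent points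
  set zk : ℕ → ℂ := fun k => z + Complex.I * ((1/(k+1) : ℝ) : ℂ) with hzk
  have hz_im : z.im = 0 := hreal z hz
  have hzk_not : ∀ k, zk k ∉ spectrum ℂ D := by
    intro k hk
    have h1 := hreal _ hk
    have h2 : (zk k).im = 1/((k:ℝ)+1) := by
      simp only [hzk, Complex.add_im, Complex.mul_im, Complex.I_re, Complex.I_im,
        Complex.ofReal_re, Complex.ofReal_im, hz_im]
      ring
    rw [h2] at h1
    have h3 : (0:ℝ) < 1/((k:ℝ)+1) := by positivity
    linarith
  have hzk_tendsto : Tendsto zk atTop (nhds z) := by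
    rw [hzk]
    have h0 : Tendsto (fun k : ℕ => ((1/(k+1) : ℝ) : ℂ)) atTop (nhds ((0:ℝ):ℂ)) :=
      (Complex.continuous_ofReal.tendsto _).comp tendsto_one_div_add_atTop_nhds_zero_nat
    simpa using (tendsto_const_nhds (x := z)).add (h0.const_mul Complex.I)
  -- units
  have hunit : ∀ k, IsUnit (algebraMap ℂ (Matrix (Fin n) (Fin n) A) (zk k) - D) := fun k =>
    not_not.mp fun h => hzk_not k (spectrum.mem_iff.mpr h)
  set r : ℕ → Matrix (Fin n) (Fin n) A := fun k => ((hunit k).unit⁻¹).val with hrdef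
  have eq1 : ∀ k, (algebraMap ℂ (Matrix (Fin n) (Fin n) A) (zk k) - D) * r k = 1 := fun k => by
    simp only [hrdef]
    have h := (hunit k).unit.mul_inv
    rwa [IsUnit.unit_spec] at h
  have eq2 : ∀ k, r k * (algebraMap ℂ (Matrix (Fin n) (Fin n) A) (zk k) - D) = 1 := fun k => by
    simp only [hrdef]
    have h := (hunit k).unit.inv_mul
    rwa [IsUnit.unit_spec] at h
  -- image of resolvents
  have hΦunit : ∀ k, Φ (r k) = Ring.inverse
      (algebraMap ℂ _ (zk k) - matCLM (D.map ⇑π)) := by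
    intro k
    have hak : Φ (algebraMap ℂ (Matrix (Fin n) (Fin n) A) (zk k) - D)
        = algebraMap ℂ _ (zk k) - matCLM (D.map ⇑π) := by
      rw [map_sub, AlgHom.commutes, hΦD]
    have hx1 : (algebraMap ℂ _ (zk k) - matCLM (D.map ⇑π)) * Φ (r k) = 1 := by
      rw [← hak, ← _root_.map_mul, eq1 k, _root_.map_one]
    have hx2 : Φ (r k) * (algebraMap ℂ _ (zk k) - matCLM (D.map ⇑π)) = 1 := by
      rw [← hak, ← _root_.map_mul, eq2 k, _root_.map_one]
    exact (Ring.inverse_unit ⟨_, Φ (r k), hx1, hx2⟩).symm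
  -- limit of images
  set S := Ring.inverse (algebraMap ℂ _ z - matCLM (D.map ⇑π)) with hS
  have hΦtendsto : Tendsto (fun k => Φ (r k)) atTop (nhds S) := by
    have hcont : ContinuousAt (fun w : ℂ =>
        Ring.inverse (algebraMap ℂ _ w - matCLM (D.map ⇑π))) z := by
      have h1 : ContinuousAt Ring.inverse (algebraMap ℂ _ z - matCLM (D.map ⇑π)) := by
        have := NormedRing.inverse_continuousAt hcon.unit
        rwa [IsUnit.unit_spec] at this
      exact ContinuousAt.comp (g := Ring.inverse)
        (f := fun w : ℂ => algebraMap ℂ ((PiLp 2 fun _ : Fin n => H) →L[ℂ]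
          PiLp 2 fun _ : Fin n => H) w - matCLM (D.map ⇑π)) h1
        (((continuous_algebraMap ℂ _).sub continuous_const).continuousAt)
    have := hcont.tendsto.comp hzk_tendsto
    rw [hS]
    refine this.congr fun k => ?_
    simp only [Function.comp_apply]
    exact (hΦunit k).symm
  -- entry limits in B(H)
  have hEtendsto : ∀ i j, Tendsto (fun k => π (r k i j)) atTop (nhds (matE i j S)) := by
    intro i j
    have h1 : ∀ k, π (r k i j) = matE i j (Φ (r k)) := fun k => by
      rw [hΦD, matE_matCLM, Matrix.map_apply]
    exact (((matE_continuous i j).tendsto S).comp hΦtendsto).congr fun k => (h1 k).symm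
  have hmem : ∀ i j, matE i j S ∈ Set.range ⇑π := fun i j =>
    hclosed.mem_of_tendsto (hEtendsto i j) (Eventually.of_forall fun k => ⟨r k i j, rfl⟩)
  -- the Banach isomorphism onto the range
  obtain ⟨M₀, hM₀⟩ := hbdd
  set πL : A →L[ℂ] (H →L[ℂ] H) :=
    LinearMap.mkContinuousOfExistsBound π.toLinearMap ⟨M₀, hM₀⟩ with hπL
  have hπL_apply : ∀ a : A, πL a = π a := fun a => rfl
  set p : Submodule ℂ (H →L[ℂ] H) := LinearMap.range (πL : A →ₗ[ℂ] (H →L[ℂ] H)) with hp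
  have hrange_eq : (p : Set (H →L[ℂ] H)) = Set.range ⇑π := by
    rw [hp]
    ext x
    simp only [SetLike.mem_coe, LinearMap.mem_range, Set.mem_range]
    rfl
  have hpclosed : IsClosed (p : Set (H →L[ℂ] H)) := hrange_eq ▸ hclosed
  haveI : CompleteSpace p := hpclosed.completeSpace_coe
  set f : A →L[ℂ] p := πL.codRestrict p (fun a => LinearMap.mem_range_self _ a) with hf
  have hker : LinearMap.ker (f : A →ₗ[ℂ] p) = ⊥ := by
    apply LinearMap.ker_eq_bot_of_injective
    intro x y hxy
    apply hinj
    exact congrArg Subtype.val hxy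
  have hfr : LinearMap.range (f : A →ₗ[ℂ] p) = ⊤ := by
    rw [LinearMap.range_eq_top]
    rintro ⟨-, a, rfl⟩
    exact ⟨a, rfl⟩
  set e : A ≃L[ℂ] p := ContinuousLinearEquiv.ofBijective f hker hfr with he
  have he_apply : ∀ a : A, (e a : H →L[ℂ] H) = π a := fun a => rfl
  have hmem' : ∀ i j, matE i j S ∈ p := fun i j => by
    rw [← SetLike.mem_coe, hrange_eq]; exact hmem i j
  have hmemπ : ∀ x : A, π x ∈ p := fun x => by
    rw [← SetLike.mem_coe, hrange_eq]; exact ⟨x, rfl⟩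
  -- the limit matrix
  set t : Matrix (Fin n) (Fin n) A := Matrix.of fun i j =>
    e.symm ⟨matE i j S, hmem' i j⟩ with ht
  have htendsto : ∀ i j, Tendsto (fun k => r k i j) atTop (nhds (t i j)) := by
    intro i j
    have h1 : ∀ k, r k i j = e.symm ⟨π (r k i j), hmemπ _⟩ := by
      intro k
      have h2 : e (r k i j) = ⟨π (r k i j), hmemπ _⟩ :=
        Subtype.ext (he_apply _)
      rw [← h2, ContinuousLinearEquiv.symm_apply_apply]
    have h2 : Tendsto (fun k => (⟨π (r k i j), hmemπ _⟩ : p)) atTop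
        (nhds ⟨matE i j S, hmem' i j⟩) := by
      rw [tendsto_subtype_rng]
      exact hEtendsto i j
    have h3 := (e.symm.continuous.tendsto _).comp h2
    refine h3.congr fun k => (h1 k).symm
  -- entries of scalar matrices converge
  have hsc : ∀ (i l : Fin n), Tendsto
      (fun k => (algebraMap ℂ (Matrix (Fin n) (Fin n) A) (zk k)) i l) atTop
      (nhds ((algebraMap ℂ (Matrix (Fin n) (Fin n) A) z) i l)) := by
    intro i l
    simp only [Matrix.algebraMap_matrix_apply]
    by_cases hil : i = l
    · simp only [hil, if_pos rfl]
      exact ((continuous_algebraMap ℂ A).tendsto z).comp hzk_tendsto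
    · simp only [if_neg hil]
      exact tendsto_const_nhds
  -- pass products to the limit
  have hmul1 : (algebraMap ℂ (Matrix (Fin n) (Fin n) A) z - D) * t = 1 := by
    ext i j
    have hk : ∀ k, ∑ l, ((algebraMap ℂ (Matrix (Fin n) (Fin n) A) (zk k)) i l - D i l)
        * r k l j = (1 : Matrix (Fin n) (Fin n) A) i j := by
      intro k
      have := congrFun (congrFun (eq1 k) i) j
      simpa [Matrix.mul_apply, Matrix.sub_apply] using this
    have hlim : Tendsto (fun k => ∑ l,
        ((algebraMap ℂ (Matrix (Fin n) (Fin n) A) (zk k)) i l - D i l) * r k l j) atTop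
        (nhds (∑ l, ((algebraMap ℂ (Matrix (Fin n) (Fin n) A) z) i l - D i l) * t l j)) := by
      refine tendsto_finset_sum _ fun l _ => ?_
      exact (Tendsto.sub (hsc i l) tendsto_const_nhds).mul (htendsto l j)
    have := tendsto_nhds_unique (hlim.congr fun k => hk k) tendsto_const_nhds
    rw [Matrix.mul_apply]
    simp only [Matrix.sub_apply]
    exact this
  have hmul2 : t * (algebraMap ℂ (Matrix (Fin n) (Fin n) A) z - D) = 1 := by
    ext i j
    have hk : ∀ k, ∑ l, r k i l *
        ((algebraMap ℂ (Matrix (Fin n) (Fin n) A) (zk k)) l j - D l j)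
        = (1 : Matrix (Fin n) (Fin n) A) i j := by
      intro k
      have := congrFun (congrFun (eq2 k) i) j
      simpa [Matrix.mul_apply, Matrix.sub_apply] using this
    have hlim : Tendsto (fun k => ∑ l, r k i l *
        ((algebraMap ℂ (Matrix (Fin n) (Fin n) A) (zk k)) l j - D l j)) atTop
        (nhds (∑ l, t i l * ((algebraMap ℂ (Matrix (Fin n) (Fin n) A) z) l j - D l j))) := by
      refine tendsto_finset_sum _ fun l _ => ?_
      exact (htendsto i l).mul ((hsc l j).sub tendsto_const_nhds)
    have := tendsto_nhds_unique (hlim.congr fun k => hk k) tendsto_const_nhds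
    rw [Matrix.mul_apply]
    simp only [Matrix.sub_apply]
    exact this
  -- contradiction
  exact spectrum.mem_iff.mp hz ⟨⟨_, t, hmul1, hmul2⟩, rfl⟩

end SpectralInclusion

/-- If `π : A → B(H)` is a bounded, unital, injective algebra homomorphism of a
unital `C*`-algebra with norm-closed range, then for every self-adjoint `D ∈ Mₙ(A)` the element
`‖π⁽ⁿ⁾(D)‖·1 + D` is positive in the `C*`-algebra `Mₙ(A)` (i.e. it is self-adjoint and its
spectrum consists of nonnegative reals). -/
theorem stmt13 {A : Type*} [NormedRing A] [StarRing A] [CStarRing A] [CompleteSpace A]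
    [NormedAlgebra ℂ A] [StarModule ℂ A]
    {H : Type*} [NormedAddCommGroup H] [InnerProductSpace ℂ H] [CompleteSpace H]
    (π : A →ₐ[ℂ] (H →L[ℂ] H))
    (hbdd : ∃ M₀ : ℝ, ∀ a : A, ‖π a‖ ≤ M₀ * ‖a‖)
    (hinj : Function.Injective ⇑π)
    (hclosed : IsClosed (Set.range ⇑π)) :
    ∀ (n : ℕ), 0 < n → ∀ D : Matrix (Fin n) (Fin n) A, Dᴴ = D →
      (((matNorm (D.map ⇑π) : ℝ) : ℂ) • (1 : Matrix (Fin n) (Fin n) A) + D)ᴴ =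
          ((matNorm (D.map ⇑π) : ℝ) : ℂ) • (1 : Matrix (Fin n) (Fin n) A) + D ∧
      spectrum ℂ (((matNorm (D.map ⇑π) : ℝ) : ℂ) • (1 : Matrix (Fin n) (Fin n) A) + D) ⊆
        {z : ℂ | ∃ r : ℝ, 0 ≤ r ∧ z = (r : ℂ)} := by
  intro n hn D hD
  constructor
  · simp [Matrix.conjTranspose_add, Matrix.conjTranspose_smul, Matrix.conjTranspose_one, hD,
      Complex.star_def, Complex.conj_ofReal]
  · intro zz hzz
    rcases subsingleton_or_nontrivial A with hA | hA
    · haveI : Subsingleton (Matrix (Fin n) (Fin n) A) :=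
        ⟨fun M N => Matrix.ext fun i j => Subsingleton.elim _ _⟩
      exact absurd (isUnit_of_subsingleton _) (spectrum.mem_iff.mp hzz)
    · set c : ℝ := matNorm (D.map ⇑π) with hc
      have hreal : ∀ w ∈ spectrum ℂ D, w.im = 0 := fun w hw =>
        matrix_selfAdjoint_spectrum_real hn hD hw
      have hzD : zz - (c:ℂ) ∈ spectrum ℂ D := by
        rw [spectrum.mem_iff] at hzz ⊢
        intro hcontra
        apply hzz
        have heq : algebraMap ℂ (Matrix (Fin n) (Fin n) A) zz -
            ((c:ℂ) • (1 : Matrix (Fin n) (Fin n) A) + D)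
            = algebraMap ℂ (Matrix (Fin n) (Fin n) A) (zz - (c:ℂ)) - D := by
          rw [map_sub, Algebra.algebraMap_eq_smul_one (A := Matrix (Fin n) (Fin n) A) ((c:ℂ)),
            Algebra.algebraMap_eq_smul_one (A := Matrix (Fin n) (Fin n) A) zz]
          abel
        rw [heq]
        exact hcontra
      have him : (zz - (c:ℂ)).im = 0 := hreal _ hzD
      have hmem := spectrum_subset_op π hbdd hinj hclosed hreal hzD
      haveI : Nontrivial H := by
        by_contra hh
        rw [not_nontrivial_iff_subsingleton] at hh
        haveI := hh
        haveI : Subsingleton (H →L[ℂ] H) :=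
          ⟨fun f g => ContinuousLinearMap.ext fun x => Subsingleton.elim _ _⟩
        exact one_ne_zero (hinj (Subsingleton.elim (π 1) (π 0)))
      haveI : Nontrivial (PiLp 2 fun _ : Fin n => H) := by
        obtain ⟨x, y, hxy⟩ := exists_pair_ne H
        exact ⟨WithLp.toLp 2 (fun _ => x), WithLp.toLp 2 (fun _ => y), fun hcontra => hxy (congrFun (congrArg WithLp.ofLp hcontra) ⟨0, hn⟩)⟩
      have hnorm : ‖zz - (c:ℂ)‖ ≤ c := by
        have := spectrum.norm_le_norm_of_mem hmem
        rw [hc]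
        exact this
      refine ⟨c + (zz - (c:ℂ)).re, ?_, ?_⟩
      · have h1 : |(zz - (c:ℂ)).re| ≤ ‖zz - (c:ℂ)‖ := Complex.abs_re_le_norm _
        have h2 : ‖zz - (c:ℂ)‖ = ‖zz - (c:ℂ)‖ := rfl
        rw [h2] at h1
        rw [abs_le] at h1
        linarith [h1.1]
      · apply Complex.ext
        · simp [Complex.ofReal_re, Complex.add_re, Complex.sub_re, Complex.ofReal_im]
        · simp only [Complex.ofReal_im]
          have : (zz - (c:ℂ)).im = zz.im := by simp [Complex.sub_im, Complex.ofReal_im]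
          rw [this] at him
          exact him
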